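/- arXiv:1908.05064 — 2 statements merged into one kernel-verified Lean document; each statement's English description precedes it below -/
import Mathlib

section
/- For every n ≥ 1, −n ≤ m ≤ n, the following integral identities hold on the unit sphere: ∫_𝕊 conj(Y_{n−1}^q) Y_n^m ν ds = a_{n−1,m}^q/(2n+1) and ∫_𝕊 conj(Y_{n−1}^q) ∇_𝕊 Y_n^m ds = ((n+1)/(2n+1)) a_{n−1,m}^q for −(n−1) ≤ q ≤ n−1; ∫_𝕊 conj(Y_{n+1}^q) Y_n^m ν ds = c_{n+1,m}^q/(2n+1) and ∫_𝕊 conj(Y_{n+1}^q) ∇_𝕊 Y_n^m ds = (−n/(2n+1)) c_{n+1,m}^q for −(n+1) ≤ q ≤ n+1; and for every p ≥ 0 with p ∉ {n−1, n+1} and −p ≤ q ≤ p, ∫_𝕊 conj(Y_p^q) Y_n^m ν ds = 0 and ∫_𝕊 conj(Y_p^q) ∇_𝕊 Y_n^m ds = 0. -/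
/- Polariton resonances / CALR for the elastic system beyond the quasi-static limit:
   general setup. -/

noncomputable section
open MeasureTheory Metric MvPolynomial Filter
open scoped Topology ComplexConjugate

/-- Euclidean space `ℝ³`. -/
abbrev E3 : Type := EuclideanSpace ℝ (Fin 3)

/-- The gradient of a complex-valued function on `ℝ³`, as a complex 3-vector.
For a `0`-homogeneous function this is, on the unit sphere, the surface gradient `∇_𝕊`. -/
def cgrad (f : E3 → ℂ) (x : E3) : Fin 3 → ℂ :=
  fun i => fderiv ℝ f x (EuclideanSpace.single i 1)

/-- The Hessian matrix `∂_i ∂_j f` of a complex-valued function on `ℝ³`. -/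
def hessC (f : E3 → ℂ) (x : E3) : Fin 3 → Fin 3 → ℂ :=
  fun i j => cgrad (fun y => cgrad f y j) x i

/-- `P` is a complex homogeneous harmonic polynomial of degree `n` in 3 variables. -/
def IsHarmonicHom (n : ℕ) (P : MvPolynomial (Fin 3) ℂ) : Prop :=
  P.IsHomogeneous n ∧ (∑ i : Fin 3, pderiv i (pderiv i P)) = 0

/-- An (orthonormal, complete) family of spherical harmonics `Y n m` (`-n ≤ m ≤ n`),
each given via its 0-homogeneous extension to `ℝ³ \ {0}`:
`Y n m` is 0-homogeneous, agrees on the unit sphere `𝕊` with a homogeneous harmonic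
polynomial of degree `n`, the family is orthonormal in `L²(𝕊)` (with respect to the
surface measure, i.e. the 2-dimensional Hausdorff measure `μH[2]`), and for each `n`
the functions `Y n m` span the degree-`n` spherical harmonics. -/
structure SphHarmFamily (Y : ℕ → ℤ → E3 → ℂ) : Prop where
  homog : ∀ (n : ℕ) (m : ℤ) (t : ℝ), 0 < t → ∀ x : E3, x ≠ 0 → Y n m (t • x) = Y n m x
  harmonic_poly : ∀ (n : ℕ) (m : ℤ), m ∈ Finset.Icc (-(n:ℤ)) (n:ℤ) →
    ∃ P : MvPolynomial (Fin 3) ℂ, IsHarmonicHom n P ∧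
      ∀ x ∈ sphere (0:E3) 1, Y n m x = eval (fun i => ((x i : ℝ) : ℂ)) P
  orthonormal : ∀ (n : ℕ) (m : ℤ) (n' : ℕ) (m' : ℤ),
    m ∈ Finset.Icc (-(n:ℤ)) (n:ℤ) → m' ∈ Finset.Icc (-(n':ℤ)) (n':ℤ) →
    (∫ x in sphere (0:E3) 1, conj (Y n m x) * Y n' m' x ∂μH[2]) =
      if n = n' ∧ m = m' then 1 else 0
  span : ∀ (n : ℕ) (P : MvPolynomial (Fin 3) ℂ), IsHarmonicHom n P →
    ∃ c : ℤ → ℂ, ∀ x ∈ sphere (0:E3) 1,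
      eval (fun i => ((x i : ℝ) : ℂ)) P = ∑ m ∈ Finset.Icc (-(n:ℤ)) (n:ℤ), c m * Y n m x


def gsph (p : Fin 2 → ℝ) : E3 :=
  (WithLp.equiv 2 (Fin 3 → ℝ)).symm
    ![Real.sin (p 0) * Real.cos (p 1), Real.sin (p 0) * Real.sin (p 1), Real.cos (p 0)]

lemma gsph_apply (p : Fin 2 → ℝ) (i : Fin 3) :
    gsph p i = ![Real.sin (p 0) * Real.cos (p 1), Real.sin (p 0) * Real.sin (p 1),
      Real.cos (p 0)] i := rfl

lemma abs_sin_sub' (a b : ℝ) : |Real.sin a - Real.sin b| ≤ |a - b| := by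
  rw [Real.sin_sub_sin, abs_mul, abs_mul, abs_two]
  have h1 : |Real.sin ((a - b) / 2)| ≤ |(a - b) / 2| := Real.abs_sin_le_abs
  have h2 : |Real.cos ((a + b) / 2)| ≤ 1 := Real.abs_cos_le_one _
  have h3 : |(a - b) / 2| = |a - b| / 2 := by rw [abs_div, abs_two]
  nlinarith [abs_nonneg (Real.sin ((a - b) / 2)), abs_nonneg (a - b)]

lemma abs_cos_sub' (a b : ℝ) : |Real.cos a - Real.cos b| ≤ |a - b| := by
  rw [Real.cos_sub_cos, abs_mul, abs_mul, abs_neg, abs_two]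
  have h1 : |Real.sin ((a - b) / 2)| ≤ |(a - b) / 2| := Real.abs_sin_le_abs
  have h2 : |Real.sin ((a + b) / 2)| ≤ 1 := Real.abs_sin_le_one _
  have h3 : |(a - b) / 2| = |a - b| / 2 := by rw [abs_div, abs_two]
  nlinarith [abs_nonneg (Real.sin ((a - b) / 2)), abs_nonneg (a - b),
    abs_nonneg (Real.sin ((a + b) / 2))]

lemma lipschitz_gsph : LipschitzWith 4 gsph := by
  apply LipschitzWith.of_dist_le_mul
  intro p q
  have hd0 : |p 0 - q 0| ≤ dist p q := by simpa [Real.dist_eq] using dist_le_pi_dist p q 0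
  have hd1 : |p 1 - q 1| ≤ dist p q := by simpa [Real.dist_eq] using dist_le_pi_dist p q 1
  have hD : (0:ℝ) ≤ dist p q := dist_nonneg
  have comp : ∀ s s' c c' : ℝ, |c| ≤ 1 → |s'| ≤ 1 →
      |s * c - s' * c'| ≤ |s - s'| + |c - c'| := by
    intro s s' c c' h1 h2
    have e : s * c - s' * c' = (s - s') * c + s' * (c - c') := by ring
    rw [e]
    refine (abs_add_le _ _).trans ?_
    rw [abs_mul, abs_mul]
    nlinarith [abs_nonneg (s - s'), abs_nonneg (c - c')]
  have b0 : |gsph p 0 - gsph q 0| ≤ 2 * dist p q := by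
    simp only [gsph_apply, Matrix.cons_val_zero]
    calc |Real.sin (p 0) * Real.cos (p 1) - Real.sin (q 0) * Real.cos (q 1)|
        ≤ |Real.sin (p 0) - Real.sin (q 0)| + |Real.cos (p 1) - Real.cos (q 1)| :=
          comp _ _ _ _ (Real.abs_cos_le_one _) (Real.abs_sin_le_one _)
      _ ≤ |p 0 - q 0| + |p 1 - q 1| := add_le_add (abs_sin_sub' _ _) (abs_cos_sub' _ _)
      _ ≤ dist p q + dist p q := add_le_add hd0 hd1
      _ = 2 * dist p q := by ring
  have b1 : |gsph p 1 - gsph q 1| ≤ 2 * dist p q := by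
    simp only [gsph_apply, Matrix.cons_val_one, Matrix.head_cons]
    calc |Real.sin (p 0) * Real.sin (p 1) - Real.sin (q 0) * Real.sin (q 1)|
        ≤ |Real.sin (p 0) - Real.sin (q 0)| + |Real.sin (p 1) - Real.sin (q 1)| :=
          comp _ _ _ _ (Real.abs_sin_le_one _) (Real.abs_sin_le_one _)
      _ ≤ |p 0 - q 0| + |p 1 - q 1| := add_le_add (abs_sin_sub' _ _) (abs_sin_sub' _ _)
      _ ≤ dist p q + dist p q := add_le_add hd0 hd1
      _ = 2 * dist p q := by ring
  have b2 : |gsph p 2 - gsph q 2| ≤ 2 * dist p q := by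
    simp only [gsph_apply, Matrix.cons_val_two, Matrix.tail_cons, Matrix.head_cons]
    calc |Real.cos (p 0) - Real.cos (q 0)| ≤ |p 0 - q 0| := abs_cos_sub' _ _
      _ ≤ dist p q := hd0
      _ ≤ 2 * dist p q := by linarith
  rw [EuclideanSpace.dist_eq]
  have hsum : (∑ i : Fin 3, dist (gsph p i) (gsph q i) ^ 2) ≤ ((4:ℝ) * dist p q) ^ 2 := by
    rw [Fin.sum_univ_three]
    simp only [Real.dist_eq]
    nlinarith [b0, b1, b2, abs_nonneg (gsph p 0 - gsph q 0), abs_nonneg (gsph p 1 - gsph q 1),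
      abs_nonneg (gsph p 2 - gsph q 2), sq_abs (gsph p 0 - gsph q 0),
      sq_abs (gsph p 1 - gsph q 1), sq_abs (gsph p 2 - gsph q 2)]
  calc Real.sqrt (∑ i : Fin 3, dist (gsph p i) (gsph q i) ^ 2)
      ≤ Real.sqrt (((4:ℝ) * dist p q) ^ 2) := Real.sqrt_le_sqrt hsum
    _ = 4 * dist p q := by rw [Real.sqrt_sq (by positivity)]
    _ = (4:NNReal) * dist p q := by norm_num

lemma sphere_subset_gsph :
    sphere (0:E3) 1 ⊆ gsph '' (Metric.closedBall (0 : Fin 2 → ℝ) 4) := by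
  intro x hx
  have hx1 : ‖x‖ = 1 := by simpa using mem_sphere_zero_iff_norm.1 hx
  have hsum : x 0 ^ 2 + x 1 ^ 2 + x 2 ^ 2 = 1 := by
    have h := EuclideanSpace.norm_eq x
    rw [hx1] at h
    have h2 : (∑ i : Fin 3, ‖x i‖ ^ 2) = 1 := by
      have := h.symm
      rwa [Real.sqrt_eq_one] at this
    simpa [Fin.sum_univ_three, Real.norm_eq_abs, sq_abs] using h2
  set z := x 2 with hz
  have hz1 : -1 ≤ z := by nlinarith
  have hz2 : z ≤ 1 := by nlinarith
  set θ := Real.arccos z with hθ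
  have hcos : Real.cos θ = z := Real.cos_arccos hz1 hz2
  have hsin : Real.sin θ = Real.sqrt (1 - z ^ 2) := Real.sin_arccos z
  have hr : Real.sqrt (x 0 ^ 2 + x 1 ^ 2) = Real.sin θ := by
    rw [hsin]; congr 1; nlinarith
  have hθ0 : 0 ≤ θ := Real.arccos_nonneg z
  have hθπ : θ ≤ Real.pi := Real.arccos_le_pi z
  have hπ4 : Real.pi ≤ 4 := Real.pi_le_four
  by_cases h0 : x 0 = 0 ∧ x 1 = 0
  · refine ⟨![θ, 0], ?_, ?_⟩
    · rw [Metric.mem_closedBall]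
      refine (dist_pi_le_iff (by norm_num)).2 fun i => ?_
      fin_cases i <;> simp [Real.dist_eq, abs_le] <;> constructor <;> linarith
    · have hs0 : Real.sin θ = 0 := by
        rw [hsin, show (1:ℝ) - z ^ 2 = 0 by nlinarith [h0.1, h0.2]]
        exact Real.sqrt_zero
      have e0 : gsph ![θ, 0] 0 = x 0 := by
        rw [gsph_apply]
        simp only [Matrix.cons_val_zero, Matrix.cons_val_one, Matrix.head_cons]
        rw [hs0, h0.1, zero_mul]
      have e1 : gsph ![θ, 0] 1 = x 1 := by
        rw [gsph_apply]
        simp only [Matrix.cons_val_zero, Matrix.cons_val_one, Matrix.head_cons]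
        rw [hs0, h0.2, zero_mul]
      have e2 : gsph ![θ, 0] 2 = x 2 := by
        rw [gsph_apply]
        simp only [Matrix.cons_val_zero, Matrix.cons_val_two, Matrix.tail_cons, Matrix.head_cons]
        rw [hcos]
      refine PiLp.ext fun i => ?_
      fin_cases i
      · exact e0
      · exact e1
      · exact e2
  · set w : ℂ := (x 0 : ℂ) + (x 1 : ℂ) * Complex.I with hw
    have hwre : w.re = x 0 := by simp [hw]
    have hwim : w.im = x 1 := by simp [hw]
    have hwne : w ≠ 0 := by
      intro hcon
      apply h0
      constructor
      · rw [← hwre, hcon]; simp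
      · rw [← hwim, hcon]; simp
    have habs2 : ‖w‖ ^ 2 = x 0 ^ 2 + x 1 ^ 2 := by
      rw [Complex.sq_norm, Complex.normSq_apply, hwre, hwim]; ring
    have habs : ‖w‖ = Real.sin θ := by
      rw [← hr, ← habs2, Real.sqrt_sq (norm_nonneg w)]
    have hkey := Complex.norm_mul_cos_add_sin_mul_I w
    have hre : ‖w‖ * Real.cos w.arg = x 0 := by
      have := congrArg Complex.re hkey
      simpa [hwre] using this
    have him : ‖w‖ * Real.sin w.arg = x 1 := by
      have := congrArg Complex.im hkey
      simpa [hwim] using this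
    have harg := Complex.abs_arg_le_pi w
    refine ⟨![θ, w.arg], ?_, ?_⟩
    · rw [Metric.mem_closedBall]
      refine (dist_pi_le_iff (by norm_num)).2 fun i => ?_
      have := abs_le.1 harg
      fin_cases i <;> simp [Real.dist_eq, abs_le] <;> constructor <;> linarith
    · have e0 : gsph ![θ, w.arg] 0 = x 0 := by
        rw [gsph_apply]
        simp only [Matrix.cons_val_zero, Matrix.cons_val_one, Matrix.head_cons]
        rw [← habs, hre]
      have e1 : gsph ![θ, w.arg] 1 = x 1 := by
        rw [gsph_apply]
        simp only [Matrix.cons_val_zero, Matrix.cons_val_one, Matrix.head_cons]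
        rw [← habs, him]
      have e2 : gsph ![θ, w.arg] 2 = x 2 := by
        rw [gsph_apply]
        simp only [Matrix.cons_val_zero, Matrix.cons_val_two, Matrix.tail_cons, Matrix.head_cons]
        rw [hcos]
      refine PiLp.ext fun i => ?_
      fin_cases i
      · exact e0
      · exact e1
      · exact e2

lemma sphere_hausdorff_lt_top : μH[2] (sphere (0:E3) 1) < ⊤ := by
  have h1 := lipschitz_gsph.hausdorffMeasure_image_le (by norm_num : (0:ℝ) ≤ 2)
    (Metric.closedBall (0 : Fin 2 → ℝ) 4)
  have h2 : μH[(2:ℝ)] (Metric.closedBall (0 : Fin 2 → ℝ) 4) < ⊤ := by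
    have hpi := hausdorffMeasure_pi_real (ι := Fin 2)
    rw [show ((Fintype.card (Fin 2) : ℝ)) = 2 by simp] at hpi
    rw [hpi]
    exact (isCompact_closedBall _ _).measure_lt_top
  calc μH[(2:ℝ)] (sphere (0:E3) 1)
      ≤ μH[(2:ℝ)] (gsph '' Metric.closedBall (0 : Fin 2 → ℝ) 4) :=
        measure_mono sphere_subset_gsph
    _ ≤ (4:NNReal) ^ (2:ℝ) * μH[(2:ℝ)] (Metric.closedBall (0 : Fin 2 → ℝ) 4) := h1
    _ < ⊤ := by
        apply ENNReal.mul_lt_top _ h2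
        exact ENNReal.rpow_lt_top_of_nonneg (by norm_num) (by simp)


lemma integrableOn_conj_mul (Y : ℕ → ℤ → E3 → ℂ) (hY : SphHarmFamily Y)
    {p : ℕ} {q : ℤ} {n : ℕ} {m : ℤ}
    (hq : q ∈ Finset.Icc (-(p:ℤ)) (p:ℤ)) (hm : m ∈ Finset.Icc (-(n:ℤ)) (n:ℤ)) :
    IntegrableOn (fun x => conj (Y p q x) * Y n m x) (sphere (0:E3) 1) μH[2] := by
  obtain ⟨P, -, hP⟩ := hY.harmonic_poly p q hq
  obtain ⟨Q, -, hQ⟩ := hY.harmonic_poly n m hm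
  haveI : IsFiniteMeasure (μH[2].restrict (sphere (0:E3) 1)) := by
    constructor
    rw [Measure.restrict_apply_univ]
    exact sphere_hausdorff_lt_top
  set g : E3 → ℂ := fun x =>
    conj (eval (fun i => ((x i : ℝ) : ℂ)) P) * eval (fun i => ((x i : ℝ) : ℂ)) Q with hg
  have hbase : Continuous fun (x : E3) => (fun i => ((x i : ℝ) : ℂ)) := by
    apply continuous_pi
    intro i
    exact Complex.continuous_ofReal.comp ((continuous_apply i).comp (PiLp.continuous_ofLp 2 _))
  have hcont : Continuous g := by
    exact ((MvPolynomial.continuous_eval (p := P)).comp hbase).star.mul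
      ((MvPolynomial.continuous_eval (p := Q)).comp hbase)
  have hInt : IntegrableOn g (sphere (0:E3) 1) μH[2] := by
    obtain ⟨C, hC⟩ := (isCompact_sphere (0:E3) 1).exists_bound_of_continuousOn hcont.continuousOn
    refine Integrable.mono' (integrable_const C) hcont.aestronglyMeasurable.restrict ?_
    exact (ae_restrict_iff' isClosed_sphere.measurableSet).2 (ae_of_all _ hC)
  exact hInt.congr_fun
    (fun x hx => by simp only [hg]; rw [← hP x hx, ← hQ x hx]) isClosed_sphere.measurableSet

/-- Proposition 2.1 (integral identities): for `n ≥ 1`, `-n ≤ m ≤ n`, the moments of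
`Y_n^m ν` and `∇_𝕊 Y_n^m` against `conj (Y_p^q)` are given by the expansion coefficients
`a_{n-1,m}^q`, `c_{n+1,m}^q` of `ℐ_{n-1}^m = ∇_𝕊 Y_n^m + n Y_n^m ν` and
`𝒩_{n+1}^m = -∇_𝕊 Y_n^m + (n+1) Y_n^m ν`, and vanish for `p ∉ {n-1, n+1}`. -/
theorem sphericalHarmonic_moment_identities
    (Y : ℕ → ℤ → E3 → ℂ) (hY : SphHarmFamily Y)
    (n : ℕ) (hn : 1 ≤ n) (m : ℤ) (hm : m ∈ Finset.Icc (-(n:ℤ)) (n:ℤ))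
    (a c : ℤ → Fin 3 → ℂ)
    (ha : ∀ x ∈ sphere (0:E3) 1, ∀ i : Fin 3,
      cgrad (Y n m) x i + (n : ℂ) * Y n m x * ((x i : ℝ) : ℂ) =
        ∑ q ∈ Finset.Icc (-((n:ℤ)-1)) ((n:ℤ)-1), a q i * Y (n-1) q x)
    (hc : ∀ x ∈ sphere (0:E3) 1, ∀ i : Fin 3,
      -cgrad (Y n m) x i + ((n : ℂ) + 1) * Y n m x * ((x i : ℝ) : ℂ) =
        ∑ q ∈ Finset.Icc (-((n:ℤ)+1)) ((n:ℤ)+1), c q i * Y (n+1) q x) :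
    (∀ q ∈ Finset.Icc (-((n:ℤ)-1)) ((n:ℤ)-1), ∀ i : Fin 3,
      (∫ x in sphere (0:E3) 1, conj (Y (n-1) q x) * Y n m x * ((x i : ℝ) : ℂ) ∂μH[2])
        = a q i / (2*(n:ℂ)+1)) ∧
    (∀ q ∈ Finset.Icc (-((n:ℤ)-1)) ((n:ℤ)-1), ∀ i : Fin 3,
      (∫ x in sphere (0:E3) 1, conj (Y (n-1) q x) * cgrad (Y n m) x i ∂μH[2])
        = (((n:ℂ)+1)/(2*(n:ℂ)+1)) * a q i) ∧
    (∀ q ∈ Finset.Icc (-((n:ℤ)+1)) ((n:ℤ)+1), ∀ i : Fin 3,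
      (∫ x in sphere (0:E3) 1, conj (Y (n+1) q x) * Y n m x * ((x i : ℝ) : ℂ) ∂μH[2])
        = c q i / (2*(n:ℂ)+1)) ∧
    (∀ q ∈ Finset.Icc (-((n:ℤ)+1)) ((n:ℤ)+1), ∀ i : Fin 3,
      (∫ x in sphere (0:E3) 1, conj (Y (n+1) q x) * cgrad (Y n m) x i ∂μH[2])
        = (-(n:ℂ)/(2*(n:ℂ)+1)) * c q i) ∧
    (∀ p : ℕ, p ≠ n - 1 → p ≠ n + 1 → ∀ q ∈ Finset.Icc (-(p:ℤ)) (p:ℤ), ∀ i : Fin 3,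
      (∫ x in sphere (0:E3) 1, conj (Y p q x) * Y n m x * ((x i : ℝ) : ℂ) ∂μH[2]) = 0 ∧
      (∫ x in sphere (0:E3) 1, conj (Y p q x) * cgrad (Y n m) x i ∂μH[2]) = 0) := by
  classical
  have hms : MeasurableSet (sphere (0:E3) 1) := isClosed_sphere.measurableSet
  have hcast1 : ((n - 1 : ℕ) : ℤ) = (n : ℤ) - 1 := by omega
  have hcast2 : ((n + 1 : ℕ) : ℤ) = (n : ℤ) + 1 := by omega
  have hne : (2 * (n : ℂ) + 1) ≠ 0 := by
    have h1 : (2 * (n : ℂ) + 1) = ((2 * n + 1 : ℕ) : ℂ) := by push_cast; ring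
    rw [h1]
    exact Nat.cast_ne_zero.2 (by omega)
  have hIa : ∀ q ∈ Finset.Icc (-((n:ℤ)-1)) ((n:ℤ)-1),
      q ∈ Finset.Icc (-((n-1:ℕ):ℤ)) ((n-1:ℕ):ℤ) := by
    intro q hq
    rw [Finset.mem_Icc] at *
    omega
  have hIc : ∀ q ∈ Finset.Icc (-((n:ℤ)+1)) ((n:ℤ)+1),
      q ∈ Finset.Icc (-((n+1:ℕ):ℤ)) ((n+1:ℕ):ℤ) := by
    intro q hq
    rw [Finset.mem_Icc] at *
    omega
  have key : ∀ (p' : ℕ) (q' : ℤ), q' ∈ Finset.Icc (-(p':ℤ)) (p':ℤ) → ∀ i : Fin 3,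
      (∫ x in sphere (0:E3) 1, conj (Y p' q' x) * Y n m x * ((x i : ℝ) : ℂ) ∂μH[2])
        = (2*(n:ℂ)+1)⁻¹ *
            ((∑ q ∈ Finset.Icc (-((n:ℤ)-1)) ((n:ℤ)-1),
                a q i * (if p' = n - 1 ∧ q' = q then 1 else 0)) +
             (∑ q ∈ Finset.Icc (-((n:ℤ)+1)) ((n:ℤ)+1),
                c q i * (if p' = n + 1 ∧ q' = q then 1 else 0))) ∧
      (∫ x in sphere (0:E3) 1, conj (Y p' q' x) * cgrad (Y n m) x i ∂μH[2])
        = (2*(n:ℂ)+1)⁻¹ *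
            (((n:ℂ)+1) * (∑ q ∈ Finset.Icc (-((n:ℤ)-1)) ((n:ℤ)-1),
                a q i * (if p' = n - 1 ∧ q' = q then 1 else 0)) -
             (n:ℂ) * (∑ q ∈ Finset.Icc (-((n:ℤ)+1)) ((n:ℤ)+1),
                c q i * (if p' = n + 1 ∧ q' = q then 1 else 0))) := by
    intro p' q' hq' i
    have hIntA : ∀ q ∈ Finset.Icc (-((n:ℤ)-1)) ((n:ℤ)-1),
        IntegrableOn (fun x => a q i * (conj (Y p' q' x) * Y (n-1) q x))
          (sphere (0:E3) 1) μH[2] :=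
      fun q hq => (integrableOn_conj_mul Y hY hq' (hIa q hq)).const_mul _
    have hIntC : ∀ q ∈ Finset.Icc (-((n:ℤ)+1)) ((n:ℤ)+1),
        IntegrableOn (fun x => c q i * (conj (Y p' q' x) * Y (n+1) q x))
          (sphere (0:E3) 1) μH[2] :=
      fun q hq => (integrableOn_conj_mul Y hY hq' (hIc q hq)).const_mul _
    have hfunA : ∀ x, conj (Y p' q' x) *
        (∑ q ∈ Finset.Icc (-((n:ℤ)-1)) ((n:ℤ)-1), a q i * Y (n-1) q x)
        = ∑ q ∈ Finset.Icc (-((n:ℤ)-1)) ((n:ℤ)-1),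
            a q i * (conj (Y p' q' x) * Y (n-1) q x) := by
      intro x
      rw [Finset.mul_sum]
      exact Finset.sum_congr rfl fun q _ => by ring
    have hfunC : ∀ x, conj (Y p' q' x) *
        (∑ q ∈ Finset.Icc (-((n:ℤ)+1)) ((n:ℤ)+1), c q i * Y (n+1) q x)
        = ∑ q ∈ Finset.Icc (-((n:ℤ)+1)) ((n:ℤ)+1),
            c q i * (conj (Y p' q' x) * Y (n+1) q x) := by
      intro x
      rw [Finset.mul_sum]
      exact Finset.sum_congr rfl fun q _ => by ring
    have hintA : IntegrableOn (fun x => conj (Y p' q' x) *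
        (∑ q ∈ Finset.Icc (-((n:ℤ)-1)) ((n:ℤ)-1), a q i * Y (n-1) q x))
        (sphere (0:E3) 1) μH[2] := by
      have he : (fun x => conj (Y p' q' x) *
          (∑ q ∈ Finset.Icc (-((n:ℤ)-1)) ((n:ℤ)-1), a q i * Y (n-1) q x))
          = fun x => ∑ q ∈ Finset.Icc (-((n:ℤ)-1)) ((n:ℤ)-1),
              a q i * (conj (Y p' q' x) * Y (n-1) q x) := funext hfunA
      rw [he]
      exact integrable_finset_sum _ hIntA
    have hintC : IntegrableOn (fun x => conj (Y p' q' x) *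
        (∑ q ∈ Finset.Icc (-((n:ℤ)+1)) ((n:ℤ)+1), c q i * Y (n+1) q x))
        (sphere (0:E3) 1) μH[2] := by
      have he : (fun x => conj (Y p' q' x) *
          (∑ q ∈ Finset.Icc (-((n:ℤ)+1)) ((n:ℤ)+1), c q i * Y (n+1) q x))
          = fun x => ∑ q ∈ Finset.Icc (-((n:ℤ)+1)) ((n:ℤ)+1),
              c q i * (conj (Y p' q' x) * Y (n+1) q x) := funext hfunC
      rw [he]
      exact integrable_finset_sum _ hIntC
    have hvalA : (∫ x in sphere (0:E3) 1, conj (Y p' q' x) *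
        (∑ q ∈ Finset.Icc (-((n:ℤ)-1)) ((n:ℤ)-1), a q i * Y (n-1) q x) ∂μH[2])
        = ∑ q ∈ Finset.Icc (-((n:ℤ)-1)) ((n:ℤ)-1),
            a q i * (if p' = n - 1 ∧ q' = q then 1 else 0) := by
      simp only [hfunA]
      rw [integral_finset_sum _ hIntA]
      refine Finset.sum_congr rfl fun q hq => ?_
      rw [integral_const_mul, hY.orthonormal p' q' (n-1) q hq' (hIa q hq)]
    have hvalC : (∫ x in sphere (0:E3) 1, conj (Y p' q' x) *
        (∑ q ∈ Finset.Icc (-((n:ℤ)+1)) ((n:ℤ)+1), c q i * Y (n+1) q x) ∂μH[2])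
        = ∑ q ∈ Finset.Icc (-((n:ℤ)+1)) ((n:ℤ)+1),
            c q i * (if p' = n + 1 ∧ q' = q then 1 else 0) := by
      simp only [hfunC]
      rw [integral_finset_sum _ hIntC]
      refine Finset.sum_congr rfl fun q hq => ?_
      rw [integral_const_mul, hY.orthonormal p' q' (n+1) q hq' (hIc q hq)]
    constructor
    · have heq : Set.EqOn (fun x => conj (Y p' q' x) * Y n m x * ((x i : ℝ) : ℂ))
          (fun x => (2*(n:ℂ)+1)⁻¹ *
            (conj (Y p' q' x) * (∑ q ∈ Finset.Icc (-((n:ℤ)-1)) ((n:ℤ)-1), a q i * Y (n-1) q x)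
             + conj (Y p' q' x) * (∑ q ∈ Finset.Icc (-((n:ℤ)+1)) ((n:ℤ)+1), c q i * Y (n+1) q x)))
          (sphere (0:E3) 1) := by
        intro x hx
        have h1 := ha x hx i
        have h2 := hc x hx i
        have h3 : (2*(n:ℂ)+1) * (Y n m x * ((x i : ℝ) : ℂ))
            = (∑ q ∈ Finset.Icc (-((n:ℤ)-1)) ((n:ℤ)-1), a q i * Y (n-1) q x)
              + (∑ q ∈ Finset.Icc (-((n:ℤ)+1)) ((n:ℤ)+1), c q i * Y (n+1) q x) := by
          linear_combination h1 + h2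
        have hB : Y n m x * ((x i : ℝ) : ℂ) = (2*(n:ℂ)+1)⁻¹ *
            ((∑ q ∈ Finset.Icc (-((n:ℤ)-1)) ((n:ℤ)-1), a q i * Y (n-1) q x)
              + (∑ q ∈ Finset.Icc (-((n:ℤ)+1)) ((n:ℤ)+1), c q i * Y (n+1) q x)) := by
          rw [← h3, inv_mul_cancel_left₀ hne]
        show conj (Y p' q' x) * Y n m x * ((x i : ℝ) : ℂ) = _
        rw [mul_assoc, hB]
        ring
      rw [setIntegral_congr_fun hms heq, integral_const_mul, integral_add hintA hintC,
        hvalA, hvalC]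
    · have heq : Set.EqOn (fun x => conj (Y p' q' x) * cgrad (Y n m) x i)
          (fun x => (2*(n:ℂ)+1)⁻¹ *
            (((n:ℂ)+1) * (conj (Y p' q' x) *
                (∑ q ∈ Finset.Icc (-((n:ℤ)-1)) ((n:ℤ)-1), a q i * Y (n-1) q x))
             - (n:ℂ) * (conj (Y p' q' x) *
                (∑ q ∈ Finset.Icc (-((n:ℤ)+1)) ((n:ℤ)+1), c q i * Y (n+1) q x))))
          (sphere (0:E3) 1) := by
        intro x hx
        have h1 := ha x hx i
        have h2 := hc x hx i
        have h3 : (2*(n:ℂ)+1) * cgrad (Y n m) x i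
            = ((n:ℂ)+1) * (∑ q ∈ Finset.Icc (-((n:ℤ)-1)) ((n:ℤ)-1), a q i * Y (n-1) q x)
              - (n:ℂ) * (∑ q ∈ Finset.Icc (-((n:ℤ)+1)) ((n:ℤ)+1), c q i * Y (n+1) q x) := by
          linear_combination ((n:ℂ)+1) * h1 - (n:ℂ) * h2
        have hB : cgrad (Y n m) x i = (2*(n:ℂ)+1)⁻¹ *
            (((n:ℂ)+1) * (∑ q ∈ Finset.Icc (-((n:ℤ)-1)) ((n:ℤ)-1), a q i * Y (n-1) q x)
              - (n:ℂ) * (∑ q ∈ Finset.Icc (-((n:ℤ)+1)) ((n:ℤ)+1), c q i * Y (n+1) q x)) := by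
          rw [← h3, inv_mul_cancel_left₀ hne]
        show conj (Y p' q' x) * cgrad (Y n m) x i = _
        rw [hB]
        ring
      rw [setIntegral_congr_fun hms heq, integral_const_mul,
        integral_sub (hintA.const_mul _) (hintC.const_mul _),
        integral_const_mul, integral_const_mul, hvalA, hvalC]
  have sumA_self : ∀ (q' : ℤ), q' ∈ Finset.Icc (-((n:ℤ)-1)) ((n:ℤ)-1) → ∀ i,
      (∑ q ∈ Finset.Icc (-((n:ℤ)-1)) ((n:ℤ)-1),
        a q i * (if n - 1 = n - 1 ∧ q' = q then 1 else 0)) = a q' i := by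
    intro q' hq' i
    simp only [true_and, mul_ite, mul_one, mul_zero]
    rw [Finset.sum_ite_eq]
    exact if_pos hq'
  have sumC_self : ∀ (q' : ℤ), q' ∈ Finset.Icc (-((n:ℤ)+1)) ((n:ℤ)+1) → ∀ i,
      (∑ q ∈ Finset.Icc (-((n:ℤ)+1)) ((n:ℤ)+1),
        c q i * (if n + 1 = n + 1 ∧ q' = q then 1 else 0)) = c q' i := by
    intro q' hq' i
    simp only [true_and, mul_ite, mul_one, mul_zero]
    rw [Finset.sum_ite_eq]
    exact if_pos hq'
  refine ⟨?_, ?_, ?_, ?_, ?_⟩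
  · intro q hq i
    have hk := (key (n-1) q (hIa q hq) i).1
    rw [hk, sumA_self q hq i]
    have : (∑ q' ∈ Finset.Icc (-((n:ℤ)+1)) ((n:ℤ)+1),
        c q' i * (if n - 1 = n + 1 ∧ q = q' then 1 else 0)) = 0 := by
      apply Finset.sum_eq_zero
      intro q' _
      simp [show ¬ (n - 1 = n + 1) from by omega]
    rw [this, add_zero, inv_mul_eq_div]
  · intro q hq i
    have hk := (key (n-1) q (hIa q hq) i).2
    rw [hk, sumA_self q hq i]
    have : (∑ q' ∈ Finset.Icc (-((n:ℤ)+1)) ((n:ℤ)+1),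
        c q' i * (if n - 1 = n + 1 ∧ q = q' then 1 else 0)) = 0 := by
      apply Finset.sum_eq_zero
      intro q' _
      simp [show ¬ (n - 1 = n + 1) from by omega]
    rw [this, mul_zero, sub_zero]
    field_simp
  · intro q hq i
    have hk := (key (n+1) q (hIc q hq) i).1
    rw [hk, sumC_self q hq i]
    have : (∑ q' ∈ Finset.Icc (-((n:ℤ)-1)) ((n:ℤ)-1),
        a q' i * (if n + 1 = n - 1 ∧ q = q' then 1 else 0)) = 0 := by
      apply Finset.sum_eq_zero
      intro q' _
      simp [show ¬ (n + 1 = n - 1) from by omega]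
    rw [this, zero_add, inv_mul_eq_div]
  · intro q hq i
    have hk := (key (n+1) q (hIc q hq) i).2
    rw [hk, sumC_self q hq i]
    have : (∑ q' ∈ Finset.Icc (-((n:ℤ)-1)) ((n:ℤ)-1),
        a q' i * (if n + 1 = n - 1 ∧ q = q' then 1 else 0)) = 0 := by
      apply Finset.sum_eq_zero
      intro q' _
      simp [show ¬ (n + 1 = n - 1) from by omega]
    rw [this, mul_zero, zero_sub]
    field_simp
  · intro p hp1 hp2 q hq i
    have hk := key p q hq i
    have hA0 : (∑ q' ∈ Finset.Icc (-((n:ℤ)-1)) ((n:ℤ)-1),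
        a q' i * (if p = n - 1 ∧ q = q' then 1 else 0)) = 0 := by
      apply Finset.sum_eq_zero
      intro q' _
      simp [hp1]
    have hC0 : (∑ q' ∈ Finset.Icc (-((n:ℤ)+1)) ((n:ℤ)+1),
        c q' i * (if p = n + 1 ∧ q = q' then 1 else 0)) = 0 := by
      apply Finset.sum_eq_zero
      intro q' _
      simp [hp2]
    constructor
    · rw [hk.1, hA0, hC0, add_zero, mul_zero]
    · rw [hk.2, hA0, hC0, mul_zero, mul_zero, sub_zero, mul_zero]
end
end

section
/- Let k > 0 and n, p ∈ ℕ₀, −p ≤ m ≤ p. On ℝ³ ∖ {0}, with Y_p^m and ∇_𝕊 Y_p^m extended 0-homogeneously and ν(x) = x/|x|, and with ∇w the Jacobian matrix (∂_j w_i) of a vector field w, the following hold: (1) ∇( h_n(k|x|) ∇_𝕊 Y_p^m ) ν = k h'_n(k|x|) ∇_𝕊 Y_p^m; (2) ( ∇( h_n(k|x|) ∇_𝕊 Y_p^m ) )^T ν = −h_n(k|x|) ∇_𝕊 Y_p^m / |x|; (3) ∇( h_n(k|x|) Y_p^m ν ) ν = k h'_n(k|x|) Y_p^m ν; (4) ( ∇(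 h_n(k|x|) Y_p^m ν ) )^T ν = k h'_n(k|x|) Y_p^m ν + ( h_n(k|x|)/|x| ) ∇_𝕊 Y_p^m; (5) ∇( h_n(k|x|) (∇_𝕊 Y_p^m ∧ ν) ) ν = k h'_n(k|x|) (∇_𝕊 Y_p^m ∧ ν); (6) ( ∇( h_n(k|x|) (∇_𝕊 Y_p^m ∧ ν) ) )^T ν = −( h_n(k|x|)/|x| ) (∇_𝕊 Y_p^m ∧ ν). -/
/- Polariton resonances / CALR for the elastic system beyond the quasi-static limit:
   general setup. -/

noncomputable section
open MeasureTheory Metric MvPolynomial Filter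
open scoped Topology ComplexConjugate

/-- The operator `f ↦ z⁻¹ f'` appearing in the Rayleigh formulas. -/
def sphD (f : ℂ → ℂ) : ℂ → ℂ := fun z => deriv f z / z

/-- Spherical Bessel function of the first kind:
`j_n(z) = (-z)^n (z⁻¹ d/dz)^n (sin z / z)`. -/
def sbJ (n : ℕ) (z : ℂ) : ℂ := (-z) ^ n * (sphD^[n] (fun w : ℂ => Complex.sin w / w)) z

/-- Spherical Hankel function of the first kind:
`h_n(z) = -i (-z)^n (z⁻¹ d/dz)^n (e^{iz} / z)`. -/
def sbH (n : ℕ) (z : ℂ) : ℂ :=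
  -Complex.I * (-z) ^ n * (sphD^[n] (fun w : ℂ => Complex.exp (Complex.I * w) / w)) z

/-- Derivative `j'_n`. -/
def sbJ' (n : ℕ) (z : ℂ) : ℂ := deriv (sbJ n) z

/-- Second derivative `j''_n`. -/
def sbJ'' (n : ℕ) (z : ℂ) : ℂ := deriv (deriv (sbJ n)) z

/-- Derivative `h'_n`. -/
def sbH' (n : ℕ) (z : ℂ) : ℂ := deriv (sbH n) z

/-- Radial projection `x ↦ x/|x|` to the unit sphere. -/
def unitize (x : E3) : E3 := ‖x‖⁻¹ • x

/-- Unit outward normal `ν(x) = x/|x|`, as a complex 3-vector. -/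
def nuHat (x : E3) : Fin 3 → ℂ := fun i => ((‖x‖⁻¹ * x i : ℝ) : ℂ)

/-- Cross product of complex 3-vectors. -/
def ccross (u v : Fin 3 → ℂ) : Fin 3 → ℂ :=
  ![u 1 * v 2 - u 2 * v 1, u 2 * v 0 - u 0 * v 2, u 0 * v 1 - u 1 * v 0]

/-- Vectorial spherical harmonic `𝒯_n^m := ∇_𝕊 Y_n^m ∧ ν`, evaluated at `x/|x|`. -/
def vshT (Y : ℕ → ℤ → E3 → ℂ) (n : ℕ) (m : ℤ) (x : E3) : Fin 3 → ℂ :=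
  ccross (cgrad (Y n m) (unitize x)) (nuHat x)

/-- Vectorial spherical harmonic `ℐ_{n-1}^m := ∇_𝕊 Y_n^m + n Y_n^m ν`, at `x/|x|`. -/
def vshI (Y : ℕ → ℤ → E3 → ℂ) (n : ℕ) (m : ℤ) (x : E3) : Fin 3 → ℂ :=
  fun i => cgrad (Y n m) (unitize x) i + (n : ℂ) * Y n m (unitize x) * nuHat x i

/-- Vectorial spherical harmonic `𝒩_{n+1}^m := -∇_𝕊 Y_n^m + (n+1) Y_n^m ν`, at `x/|x|`. -/
def vshN (Y : ℕ → ℤ → E3 → ℂ) (n : ℕ) (m : ℤ) (x : E3) : Fin 3 → ℂ :=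
  fun i => -cgrad (Y n m) (unitize x) i + ((n : ℂ) + 1) * Y n m (unitize x) * nuHat x i



lemma unitize_apply (x : E3) (i : Fin 3) : unitize x i = ‖x‖⁻¹ * x i := rfl

lemma nuHat_eq_unitize (x : E3) (j : Fin 3) : nuHat x j = ((unitize x j : ℝ) : ℂ) := rfl

lemma norm_unitize {x : E3} (hx : x ≠ 0) : ‖unitize x‖ = 1 := by
  have h : ‖x‖ ≠ 0 := norm_ne_zero_iff.2 hx
  rw [unitize, norm_smul]
  simp [abs_of_nonneg (inv_nonneg.2 (norm_nonneg x)), inv_mul_cancel₀ h]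

lemma unitize_ne_zero {x : E3} (hx : x ≠ 0) : unitize x ≠ 0 := by
  intro h
  have := norm_unitize hx
  rw [h] at this; simp at this

lemma unitize_mem_sphere {x : E3} (hx : x ≠ 0) : unitize x ∈ Metric.sphere (0:E3) 1 := by
  simpa using norm_unitize hx

lemma unitize_smul {x : E3} {c : ℝ} (hc : 0 < c) : unitize (c • x) = unitize x := by
  rw [unitize, unitize, norm_smul, smul_smul, Real.norm_eq_abs, abs_of_pos hc]
  congr 1
  rcases eq_or_ne ‖x‖ 0 with h|h
  · simp [h]
  · field_simp

lemma unitize_idem {x : E3} (hx : x ≠ 0) : unitize (unitize x) = unitize x := by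
  show ‖unitize x‖⁻¹ • unitize x = unitize x
  rw [norm_unitize hx]; simp

lemma sum_coord_single (v : E3) :
    ∑ j, v j • EuclideanSpace.single j (1:ℝ) = v := by
  have := (EuclideanSpace.basisFun (Fin 3) ℝ).sum_repr v
  simpa [EuclideanSpace.basisFun_apply, EuclideanSpace.basisFun_repr] using this

lemma sum_clm_apply_nu (L : E3 →L[ℝ] ℂ) (x : E3) :
    ∑ j, L (EuclideanSpace.single j 1) * nuHat x j = L (unitize x) := by
  have h : ∀ j : Fin 3, L (EuclideanSpace.single j 1) * nuHat x j
      = L ((unitize x j) • EuclideanSpace.single j 1) := by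
    intro j
    rw [_root_.map_smul, nuHat_eq_unitize]
    simp [Complex.real_smul, mul_comm]
  rw [Finset.sum_congr rfl (fun j _ => h j), ← map_sum]
  congr 1
  exact sum_coord_single (unitize x)

lemma sum_sq_nu {x : E3} (hx : x ≠ 0) : ∑ j, nuHat x j * nuHat x j = 1 := by
  have h : ∑ j, (unitize x j) * (unitize x j) = 1 := by
    have h2 : (inner ℝ (unitize x) (unitize x) : ℝ) = 1 := by
      rw [real_inner_self_eq_norm_sq, norm_unitize hx]; norm_num
    rw [← h2, PiLp.inner_apply]
    simp [RCLike.inner_apply, sq]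
  calc ∑ j, nuHat x j * nuHat x j = ((∑ j, unitize x j * unitize x j : ℝ) : ℂ) := by
        push_cast [nuHat_eq_unitize]; rfl
    _ = 1 := by rw [h]; norm_num


open MvPolynomial in
lemma contDiff_eval_poly (P : MvPolynomial (Fin 3) ℂ) :
    ContDiff ℝ ⊤ (fun v : Fin 3 → ℂ => eval v P) := by
  induction P using MvPolynomial.induction_on with
  | C a => simpa using contDiff_const (c := a)
  | add p q hp hq =>
      have : (fun v : Fin 3 → ℂ => eval v (p + q))
          = fun v => eval v p + eval v q := by funext v; simp
      rw [this]; exact hp.add hq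
  | mul_X p i hp =>
      have : (fun v : Fin 3 → ℂ => eval v (p * X i))
          = fun v => eval v p * v i := by funext v; simp
      rw [this]
      exact hp.mul (ContinuousLinearMap.proj (R := ℝ) (φ := fun _ : Fin 3 => ℂ) i).contDiff

lemma ray_fderiv_zero {A : E3 → ℂ} {z : E3} (hd : DifferentiableAt ℝ A z)
    (hA : ∀ c : ℝ, 0 < c → A (c • z) = A z) : fderiv ℝ A z z = 0 := by
  have hline : HasDerivAt (fun t : ℝ => (1 + t) • z) z 0 := by
    simpa using ((hasDerivAt_id (0:ℝ)).const_add 1).smul_const z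
  have hAz : HasFDerivAt A (fderiv ℝ A z) ((1 + (0:ℝ)) • z) := by
    simpa using hd.hasFDerivAt
  have hcomp : HasDerivAt (fun t : ℝ => A ((1 + t) • z)) (fderiv ℝ A z z) 0 :=
    hAz.comp_hasDerivAt 0 hline
  have hev : (fun t : ℝ => A ((1 + t) • z)) =ᶠ[nhds (0:ℝ)] fun _ => A z := by
    filter_upwards [Metric.ball_mem_nhds (0:ℝ) one_pos] with t ht
    have : 0 < 1 + t := by
      simp only [Metric.mem_ball, Real.dist_eq, sub_zero] at ht
      linarith [abs_lt.1 ht |>.1]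
    exact hA _ this
  have hconst : HasDerivAt (fun t : ℝ => A ((1 + t) • z)) 0 0 :=
    (hasDerivAt_const (0:ℝ) (A z)).congr_of_eventuallyEq hev
  exact hcomp.unique hconst

lemma fderiv_scale {A : E3 → ℂ} (hA : ∀ y : E3, y ≠ 0 → ∀ c : ℝ, 0 < c → A (c • y) = A y)
    (hsm : ∀ y : E3, y ≠ 0 → DifferentiableAt ℝ A y) {x : E3} (hx : x ≠ 0) {c : ℝ}
    (hc : 0 < c) (v : E3) : fderiv ℝ A (c • x) v = c⁻¹ • fderiv ℝ A x v := by
  have hcx : c • x ≠ 0 := smul_ne_zero hc.ne' hx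
  have hch : HasFDerivAt (fun y : E3 => A (c • y))
      ((fderiv ℝ A (c • x)).comp (c • ContinuousLinearMap.id ℝ E3)) x := by
    have hs : HasFDerivAt (fun y : E3 => c • y) (c • ContinuousLinearMap.id ℝ E3) x :=
      (hasFDerivAt_id x).const_smul c
    exact ((hsm _ hcx).hasFDerivAt).comp x hs
  have hev : (fun y : E3 => A (c • y)) =ᶠ[nhds x] A := by
    filter_upwards [isOpen_ne.mem_nhds (show x ≠ (0:E3) from hx)] with y hy
    exact hA y hy c hc
  have : fderiv ℝ A x = (fderiv ℝ A (c • x)).comp (c • ContinuousLinearMap.id ℝ E3) := by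
    rw [← hch.fderiv]
    exact (hev.fderiv_eq).symm
  rw [this]
  simp only [ContinuousLinearMap.coe_comp', Function.comp_apply, ContinuousLinearMap.smul_apply,
    ContinuousLinearMap.coe_smul', Pi.smul_apply, ContinuousLinearMap.coe_id', id_eq, _root_.map_smul]
  rw [smul_smul, inv_mul_cancel₀ hc.ne', one_smul]


lemma norm_hasFDerivAt {x : E3} (hx : x ≠ 0) :
    HasFDerivAt (fun y : E3 => ‖y‖) (‖x‖⁻¹ • (innerSL ℝ x : E3 →L[ℝ] ℝ)) x := by
  have hinner : HasFDerivAt (fun y : E3 => (inner ℝ y y : ℝ))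
      ((fderivInnerCLM ℝ (x, x)).comp
        ((ContinuousLinearMap.id ℝ E3).prod (ContinuousLinearMap.id ℝ E3))) x :=
    (hasFDerivAt_id x).inner ℝ (hasFDerivAt_id x)
  have hxx : (inner ℝ x x : ℝ) ≠ 0 := by
    rw [real_inner_self_eq_norm_sq]
    exact pow_ne_zero 2 (norm_ne_zero_iff.2 hx)
  have hsqrt := HasDerivAt.comp_hasFDerivAt (f := fun y : E3 => (inner ℝ y y : ℝ)) x
    (Real.hasDerivAt_sqrt hxx) hinner
  have heq : (fun y : E3 => Real.sqrt (inner ℝ y y : ℝ)) = fun y : E3 => ‖y‖ := by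
    funext y
    rw [real_inner_self_eq_norm_sq, Real.sqrt_sq (norm_nonneg y)]
  rw [show ((fun t => Real.sqrt t) ∘ fun y : E3 => (inner ℝ y y : ℝ)) = fun y : E3 => ‖y‖
    from heq] at hsqrt
  refine hsqrt.congr_fderiv ?_; symm
  ext v
  simp only [ContinuousLinearMap.smul_apply, ContinuousLinearMap.coe_smul',
    Pi.smul_apply, ContinuousLinearMap.coe_comp', Function.comp_apply,
    ContinuousLinearMap.prod_apply, ContinuousLinearMap.coe_id', id_eq,
    fderivInnerCLM_apply, innerSL_apply_apply, smul_eq_mul]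
  rw [real_inner_self_eq_norm_sq, Real.sqrt_sq (norm_nonneg x), real_inner_comm v x]
  have h : ‖x‖ ≠ 0 := norm_ne_zero_iff.2 hx
  field_simp
  ring

lemma inner_single (x : E3) (j : Fin 3) : (inner ℝ x (EuclideanSpace.single j (1:ℝ)) : ℝ) = x j := by
  rw [EuclideanSpace.inner_single_right]
  simp

lemma nu_hasFDerivAt {x : E3} (hx : x ≠ 0) (j : Fin 3) :
    ∃ M : E3 →L[ℝ] ℂ, HasFDerivAt (fun y : E3 => nuHat y j) M x ∧
      ∀ i : Fin 3, M (EuclideanSpace.single i 1) =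
        ((‖x‖⁻¹ * ((if i = j then 1 else 0) - unitize x i * unitize x j) : ℝ) : ℂ) := by
  have hr : ‖x‖ ≠ 0 := norm_ne_zero_iff.2 hx
  have h1 := norm_hasFDerivAt hx
  have h2 : HasFDerivAt (fun y : E3 => ‖y‖⁻¹)
      (-((‖x‖ ^ 2)⁻¹) • (‖x‖⁻¹ • (innerSL ℝ x : E3 →L[ℝ] ℝ))) x :=
    (hasDerivAt_inv hr).comp_hasFDerivAt x h1
  have h3 : HasFDerivAt (fun y : E3 => y j)
      (EuclideanSpace.proj j : E3 →L[ℝ] ℝ) x :=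
    (EuclideanSpace.proj j : E3 →L[ℝ] ℝ).hasFDerivAt
  have h4 := h2.mul h3
  have h5 := Complex.ofRealCLM.hasFDerivAt.comp x h4
  refine ⟨_, h5, fun i => ?_⟩
  simp only [ContinuousLinearMap.coe_comp', Function.comp_apply,
    ContinuousLinearMap.add_apply, ContinuousLinearMap.coe_smul', Pi.smul_apply,
    ContinuousLinearMap.smul_apply, innerSL_apply_apply, smul_eq_mul,
    Complex.ofRealCLM_apply, PiLp.proj_apply, inner_single,
    EuclideanSpace.single_apply, unitize_apply]
  norm_cast
  rcases eq_or_ne i j with h | h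
  · subst h
    simp only [if_pos rfl]
    field_simp
    ring
  · rw [if_neg h, if_neg (Ne.symm h)]
    field_simp
    ring


lemma sphD_diffOn {f : ℂ → ℂ} (hf : DifferentiableOn ℂ f {z : ℂ | z ≠ 0}) :
    DifferentiableOn ℂ (sphD f) {z : ℂ | z ≠ 0} := by
  have hopen : IsOpen {z : ℂ | z ≠ 0} := isOpen_ne
  have h1 : DifferentiableOn ℂ (deriv f) {z : ℂ | z ≠ 0} :=
    ((hf.analyticOnNhd hopen).deriv).differentiableOn
  exact h1.div differentiableOn_id (fun z hz => hz)

lemma sbH_diffOn (n : ℕ) : DifferentiableOn ℂ (sbH n) {z : ℂ | z ≠ 0} := by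
  have hopen : IsOpen {z : ℂ | z ≠ 0} := isOpen_ne
  have hbase : DifferentiableOn ℂ (fun w : ℂ => Complex.exp (Complex.I * w) / w) {z : ℂ | z ≠ 0} := by
    apply DifferentiableOn.div _ differentiableOn_id (fun z hz => hz)
    exact (Complex.differentiable_exp.comp (differentiable_const _|>.mul differentiable_id)).differentiableOn
  have hiter : DifferentiableOn ℂ (sphD^[n] (fun w : ℂ => Complex.exp (Complex.I * w) / w)) {z : ℂ | z ≠ 0} := by
    induction n with
    | zero => simpa using hbase
    | succ n ih =>
      rw [Function.iterate_succ_apply']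
      exact sphD_diffOn ih
  unfold sbH
  exact (differentiableOn_const _ |>.mul ((differentiableOn_id.neg).pow n)).mul hiter

lemma sbH_hasDerivAt (n : ℕ) {z : ℂ} (hz : z ≠ 0) : HasDerivAt (sbH n) (sbH' n z) z :=
  ((sbH_diffOn n).differentiableAt (isOpen_ne.mem_nhds hz)).hasDerivAt


lemma radial_sum {F A : E3 → ℂ} {x : E3} (hx : x ≠ 0) {c : ℂ}
    (hF : DifferentiableAt ℝ F x) (hA : DifferentiableAt ℝ A x)
    (hFx : fderiv ℝ F x x = c)
    (hA0 : ∀ t : ℝ, 0 < t → A (t • x) = A x) :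
    ∑ j, fderiv ℝ (fun y => F y * A y) x (EuclideanSpace.single j 1) * nuHat x j
      = (‖x‖ : ℂ)⁻¹ * (A x * c) := by
  rw [sum_clm_apply_nu (fderiv ℝ (fun y => F y * A y) x) x]
  rw [show unitize x = ‖x‖⁻¹ • x from rfl]
  rw [fderiv_fun_mul hF hA]
  rw [ContinuousLinearMap.map_smul]
  simp only [ContinuousLinearMap.add_apply, ContinuousLinearMap.coe_smul', Pi.smul_apply,
    smul_eq_mul]
  rw [ray_fderiv_zero hA hA0, hFx]
  rw [Complex.real_smul]
  push_cast
  ring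

lemma trans_sum {F : E3 → ℂ} {V : E3 → Fin 3 → ℂ} {x : E3} (hx : x ≠ 0)
    (hF : DifferentiableAt ℝ F x) (hV : ∀ j, DifferentiableAt ℝ (fun y => V y j) x)
    (hV0 : ∀ y : E3, y ≠ 0 → ∑ j, nuHat y j * V y j = 0) (i : Fin 3) :
    ∑ j, fderiv ℝ (fun y => F y * V y j) x (EuclideanSpace.single i 1) * nuHat x j
      = -(F x * V x i / (‖x‖ : ℂ)) := by
  have hr : ‖x‖ ≠ 0 := norm_ne_zero_iff.2 hx
  choose M hM hMval using fun j => nu_hasFDerivAt hx j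
  set ei := EuclideanSpace.single i (1:ℝ) with hei
  -- pointwise Euler at x
  have hpt : ∑ j, nuHat x j * V x j = 0 := hV0 x hx
  -- derivative of the identically-vanishing function S
  have hSder : ∑ j, (nuHat x j * fderiv ℝ (fun y => V y j) x ei
      + M j ei * V x j) = 0 := by
    have hS := HasFDerivAt.fun_sum (fun (j : Fin 3) (_ : j ∈ Finset.univ) =>
      (hM j).fun_mul' ((hV j).hasFDerivAt))
    have hev : (fun y : E3 => ∑ j, nuHat y j * V y j) =ᶠ[nhds x] fun _ => (0:ℂ) := by
      filter_upwards [isOpen_ne.mem_nhds (show x ≠ (0:E3) from hx)] with y hy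
      exact hV0 y hy
    have h0 : fderiv ℝ (fun y : E3 => ∑ j, nuHat y j * V y j) x = 0 := by
      rw [hev.fderiv_eq]; exact fderiv_const_apply 0
    have h2 := hS.fderiv
    rw [h0] at h2
    have h3 := congrArg (fun (L : E3 →L[ℝ] ℂ) => L ei) h2.symm
    simpa [ContinuousLinearMap.sum_apply, ContinuousLinearMap.add_apply,
      ContinuousLinearMap.coe_smul', Pi.smul_apply, smul_eq_mul,
      ContinuousLinearMap.smulRight_apply, mul_comm] using h3
  -- expand the main sum
  have hexp : ∀ j, fderiv ℝ (fun y => F y * V y j) x ei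
      = F x * fderiv ℝ (fun y => V y j) x ei + V x j * fderiv ℝ F x ei := by
    intro j
    rw [fderiv_fun_mul hF (hV j)]
    simp only [ContinuousLinearMap.add_apply, ContinuousLinearMap.coe_smul', Pi.smul_apply,
      smul_eq_mul]
    try ring
  calc ∑ j, fderiv ℝ (fun y => F y * V y j) x ei * nuHat x j
      = F x * (∑ j, nuHat x j * fderiv ℝ (fun y => V y j) x ei)
        + fderiv ℝ F x ei * (∑ j, nuHat x j * V x j) := by
        simp only [hexp]
        rw [Finset.mul_sum, Finset.mul_sum, ← Finset.sum_add_distrib]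
        congr 1; funext j; ring
    _ = F x * (∑ j, nuHat x j * fderiv ℝ (fun y => V y j) x ei) := by rw [hpt]; ring
    _ = F x * (- ∑ j, M j ei * V x j) := by
        congr 1
        have := hSder
        rw [Finset.sum_add_distrib] at this
        linear_combination this
    _ = -(F x * V x i / (‖x‖ : ℂ)) := by
        have hval : ∑ j, M j ei * V x j
            = (‖x‖ : ℂ)⁻¹ * V x i - (‖x‖ : ℂ)⁻¹ * (unitize x i : ℝ) * ∑ j, nuHat x j * V x j := by
          simp only [hMval, hei]
          push_cast
          rw [Fin.sum_univ_three, Fin.sum_univ_three]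
          simp only [nuHat_eq_unitize]
          push_cast
          fin_cases i <;> simp <;> try ring
        rw [hval, hpt]
        try field_simp
        try ring

lemma part4_sum {W : E3 → ℂ} {x : E3} (hx : x ≠ 0)
    (hW : DifferentiableAt ℝ W x) (i : Fin 3) :
    ∑ j, fderiv ℝ (fun y => W y * nuHat y j) x (EuclideanSpace.single i 1) * nuHat x j
      = fderiv ℝ W x (EuclideanSpace.single i 1) := by
  have hr : ‖x‖ ≠ 0 := norm_ne_zero_iff.2 hx
  choose M hM hMval using fun j => nu_hasFDerivAt hx j
  set ei := EuclideanSpace.single i (1:ℝ) with hei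
  have hexp : ∀ j, fderiv ℝ (fun y => W y * nuHat y j) x ei
      = W x * M j ei + nuHat x j * fderiv ℝ W x ei := by
    intro j
    have h4 := (hW.hasFDerivAt.fun_mul' (hM j)).fderiv
    rw [h4]
    simp only [ContinuousLinearMap.add_apply, ContinuousLinearMap.coe_smul', Pi.smul_apply,
      smul_eq_mul, ContinuousLinearMap.smulRight_apply, op_smul_eq_mul]
    try ring
  have hsq : ∑ j, nuHat x j * nuHat x j = 1 := sum_sq_nu hx
  calc ∑ j, fderiv ℝ (fun y => W y * nuHat y j) x ei * nuHat x j
      = W x * (∑ j, M j ei * nuHat x j)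
        + fderiv ℝ W x ei * (∑ j, nuHat x j * nuHat x j) := by
        simp only [hexp]
        rw [Finset.mul_sum, Finset.mul_sum, ← Finset.sum_add_distrib]
        congr 1; funext j; ring
    _ = W x * (∑ j, M j ei * nuHat x j) + fderiv ℝ W x ei := by rw [hsq, mul_one]
    _ = fderiv ℝ W x ei := by
        have hzero : ∑ j, M j ei * nuHat x j = 0 := by
          have h1 : ∑ j, (unitize x j) * (unitize x j) = 1 := by
            have h2 : (inner ℝ (unitize x) (unitize x) : ℝ) = 1 := by
              rw [real_inner_self_eq_norm_sq, norm_unitize hx]; norm_num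
            rw [← h2, PiLp.inner_apply]
            simp [RCLike.inner_apply, sq]
          have h1c : ((unitize x 0 : ℝ) : ℂ) * (unitize x 0 : ℝ)
              + ((unitize x 1 : ℝ) : ℂ) * (unitize x 1 : ℝ)
              + ((unitize x 2 : ℝ) : ℂ) * (unitize x 2 : ℝ) = 1 := by
            rw [Fin.sum_univ_three] at h1
            exact_mod_cast h1
          simp only [hMval, hei, nuHat_eq_unitize]
          rw [Fin.sum_univ_three]
          push_cast
          fin_cases i
          · simp only [Fin.zero_eta, Fin.mk_one, Fin.reduceFinMk, Fin.reduceEq, if_true,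
              if_false, reduceIte, Complex.ofReal_one, Complex.ofReal_zero]
            linear_combination (-(((‖x‖ : ℝ) : ℂ)⁻¹ * ((unitize x 0 : ℝ) : ℂ))) * h1c
          · simp only [Fin.zero_eta, Fin.mk_one, Fin.reduceFinMk, Fin.reduceEq, if_true,
              if_false, reduceIte, Complex.ofReal_one, Complex.ofReal_zero]
            linear_combination (-(((‖x‖ : ℝ) : ℂ)⁻¹ * ((unitize x 1 : ℝ) : ℂ))) * h1c
          · simp only [Fin.zero_eta, Fin.mk_one, Fin.reduceFinMk, Fin.reduceEq, if_true,
              if_false, reduceIte, Complex.ofReal_one, Complex.ofReal_zero]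
            linear_combination (-(((‖x‖ : ℝ) : ℂ)⁻¹ * ((unitize x 2 : ℝ) : ℂ))) * h1c
        rw [hzero, mul_zero, zero_add]


lemma F_hasFDerivAt {x : E3} (hx : x ≠ 0) {k : ℝ} (hk : 0 < k) (n : ℕ) :
    HasFDerivAt (fun y : E3 => sbH n ((k * ‖y‖ : ℝ) : ℂ))
      ((ContinuousLinearMap.smulRight (1 : ℝ →L[ℝ] ℝ)
          ((k : ℂ) * sbH' n ((k * ‖x‖ : ℝ) : ℂ))).comp
        (‖x‖⁻¹ • (innerSL ℝ x : E3 →L[ℝ] ℝ))) x := by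
  have hr : (0:ℝ) < ‖x‖ := norm_pos_iff.2 hx
  have hz : ((k * ‖x‖ : ℝ) : ℂ) ≠ 0 := by
    exact_mod_cast (mul_pos hk hr).ne'
  have hH : HasDerivAt (sbH n) (sbH' n ((k * ‖x‖ : ℝ) : ℂ)) ((k:ℂ) * ((‖x‖ : ℝ) : ℂ)) := by
    have := sbH_hasDerivAt n hz
    convert this using 2
    push_cast; ring
  have hmul : HasDerivAt (fun z : ℂ => (k:ℂ) * z) ((k:ℂ)) ((‖x‖ : ℝ) : ℂ) := by
    simpa using (hasDerivAt_id (((‖x‖ : ℝ)) : ℂ)).const_mul (k:ℂ)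
  have hχ : HasDerivAt (fun z : ℂ => sbH n ((k:ℂ) * z))
      (sbH' n ((k * ‖x‖ : ℝ) : ℂ) * (k:ℂ)) ((‖x‖ : ℝ) : ℂ) := hH.comp _ hmul
  have hψ : HasDerivAt (fun t : ℝ => sbH n ((k:ℂ) * (t : ℂ)))
      (sbH' n ((k * ‖x‖ : ℝ) : ℂ) * (k:ℂ)) ‖x‖ := hχ.comp_ofReal
  have hFf := hψ.hasFDerivAt.comp x (norm_hasFDerivAt hx)
  have hfun : ((fun t : ℝ => sbH n ((k:ℂ) * (t : ℂ))) ∘ (fun y : E3 => ‖y‖))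
      = fun y : E3 => sbH n ((k * ‖y‖ : ℝ) : ℂ) := by
    funext y; simp only [Function.comp_apply]; norm_cast
  rw [hfun] at hFf
  refine hFf.congr_fderiv ?_; symm
  ext v
  simp only [ContinuousLinearMap.coe_comp', Function.comp_apply,
    ContinuousLinearMap.smulRight_apply, ContinuousLinearMap.one_apply,
    ContinuousLinearMap.coe_smul', Pi.smul_apply, innerSL_apply_apply, smul_eq_mul,
    ContinuousLinearMap.toSpanSingleton_apply]
  rw [Complex.real_smul, Complex.real_smul]
  push_cast
  ring


/-- Proposition 3.8: Jacobian identities on `ℝ³ \ {0}` for the fields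
`h_n(k|x|) ∇_𝕊 Y_p^m`, `h_n(k|x|) Y_p^m ν` and `h_n(k|x|) (∇_𝕊 Y_p^m ∧ ν)`,
with the spherical quantities extended 0-homogeneously, `ν(x) = x/|x|`, `∇w` the
Jacobian matrix `(∂_j w_i)` and `(∇w)^T` its transpose. -/
theorem jacobian_identities_hankel_vsh
    (Y : ℕ → ℤ → E3 → ℂ) (hY : SphHarmFamily Y)
    (k : ℝ) (hk : 0 < k) (n p : ℕ) (m : ℤ) (hm : m ∈ Finset.Icc (-(p:ℤ)) (p:ℤ)) :
    ∀ x : E3, x ≠ 0 → ∀ i : Fin 3,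
      ((∑ j, cgrad (fun y => sbH n ((k * ‖y‖ : ℝ)) * cgrad (Y p m) (unitize y) i) x j
          * nuHat x j)
        = (k:ℂ) * sbH' n ((k * ‖x‖ : ℝ)) * cgrad (Y p m) (unitize x) i) ∧
      ((∑ j, cgrad (fun y => sbH n ((k * ‖y‖ : ℝ)) * cgrad (Y p m) (unitize y) j) x i
          * nuHat x j)
        = -(sbH n ((k * ‖x‖ : ℝ)) * cgrad (Y p m) (unitize x) i / (‖x‖ : ℂ))) ∧
      ((∑ j, cgrad (fun y => sbH n ((k * ‖y‖ : ℝ)) * Y p m (unitize y) * nuHat y i) x j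
          * nuHat x j)
        = (k:ℂ) * sbH' n ((k * ‖x‖ : ℝ)) * Y p m (unitize x) * nuHat x i) ∧
      ((∑ j, cgrad (fun y => sbH n ((k * ‖y‖ : ℝ)) * Y p m (unitize y) * nuHat y j) x i
          * nuHat x j)
        = (k:ℂ) * sbH' n ((k * ‖x‖ : ℝ)) * Y p m (unitize x) * nuHat x i
            + (sbH n ((k * ‖x‖ : ℝ)) / (‖x‖ : ℂ)) * cgrad (Y p m) (unitize x) i) ∧
      ((∑ j, cgrad (fun y => sbH n ((k * ‖y‖ : ℝ))
            * ccross (cgrad (Y p m) (unitize y)) (nuHat y) i) x j * nuHat x j)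
        = (k:ℂ) * sbH' n ((k * ‖x‖ : ℝ))
            * ccross (cgrad (Y p m) (unitize x)) (nuHat x) i) ∧
      ((∑ j, cgrad (fun y => sbH n ((k * ‖y‖ : ℝ))
            * ccross (cgrad (Y p m) (unitize y)) (nuHat y) j) x i * nuHat x j)
        = -(sbH n ((k * ‖x‖ : ℝ)) / (‖x‖ : ℂ))
            * ccross (cgrad (Y p m) (unitize x)) (nuHat x) i) := by
  intro x hx i
  obtain ⟨P, hP, hPeq⟩ := hY.harmonic_poly p m hm
  have hr0 : ‖x‖ ≠ 0 := norm_ne_zero_iff.2 hx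
  have hrpos : (0:ℝ) < ‖x‖ := norm_pos_iff.2 hx
  have hrC : ((‖x‖ : ℝ) : ℂ) ≠ 0 := by exact_mod_cast hr0
  -- the polynomial extension g of Y p m
  set g : E3 → ℂ := fun y => MvPolynomial.eval (fun i => ((unitize y i : ℝ) : ℂ)) P with hgdef
  have hgsm : ∀ y : E3, y ≠ 0 → ContDiffAt ℝ ⊤ g y := by
    intro y hy
    have h1 : ContDiff ℝ ⊤ (fun v : Fin 3 → ℂ => MvPolynomial.eval v P) := contDiff_eval_poly P
    have h2 : ContDiffAt ℝ ⊤ (fun z : E3 => (fun i => ((unitize z i : ℝ) : ℂ))) y := by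
      rw [contDiffAt_pi]
      intro i
      have hn : ContDiffAt ℝ ⊤ (fun z : E3 => ‖z‖) y := contDiffAt_norm ℝ hy
      have h3 : ContDiffAt ℝ ⊤ (fun z : E3 => ‖z‖⁻¹ * z i) y :=
        (hn.inv (norm_ne_zero_iff.2 hy)).mul
          ((EuclideanSpace.proj i : E3 →L[ℝ] ℝ).contDiff.contDiffAt)
      exact Complex.ofRealCLM.contDiff.contDiffAt.comp y h3
    exact (h1.contDiffAt).comp y h2
  have hgd : ∀ y : E3, y ≠ 0 → DifferentiableAt ℝ g y :=
    fun y hy => ((hgsm y hy).differentiableAt (by simp))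
  have hghom : ∀ y : E3, y ≠ 0 → ∀ c : ℝ, 0 < c → g (c • y) = g y := by
    intro y hy c hc
    simp only [hgdef, unitize_smul hc]
  have hYg : ∀ z : E3, z ≠ 0 → Y p m z = g z := by
    intro z hz
    have h1 := hY.homog p m (‖z‖⁻¹) (inv_pos.2 (norm_pos_iff.2 hz)) z hz
    have h2 := hPeq (unitize z) (unitize_mem_sphere hz)
    rw [hgdef, ← h1]
    rw [show (‖z‖⁻¹ • z : E3) = unitize z from rfl, h2]
  have hYgu : ∀ y : E3, y ≠ 0 → Y p m (unitize y) = g y := by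
    intro y hy
    rw [hYg (unitize y) (unitize_ne_zero hy)]
    exact hghom y hy ‖y‖⁻¹ (inv_pos.2 (norm_pos_iff.2 hy))
  -- the surface gradient field V
  set V : E3 → Fin 3 → ℂ :=
    fun y j => ((‖y‖ : ℝ) : ℂ) * fderiv ℝ g y (EuclideanSpace.single j 1) with hVdef
  have hkey : ∀ y : E3, y ≠ 0 → cgrad (Y p m) (unitize y) = fun j => V y j := by
    intro y hy
    funext j
    have hYgev : Y p m =ᶠ[nhds (unitize y)] g := by
      filter_upwards [isOpen_ne.mem_nhds
        (show unitize y ≠ (0:E3) from unitize_ne_zero hy)] with z hz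
      exact hYg z hz
    have h1 : cgrad (Y p m) (unitize y) j = fderiv ℝ g (unitize y) (EuclideanSpace.single j 1) := by
      unfold cgrad
      rw [hYgev.fderiv_eq]
    have h2 := fderiv_scale hghom hgd hy (inv_pos.2 (norm_pos_iff.2 hy))
      (EuclideanSpace.single j 1)
    rw [h1, show (unitize y : E3) = ‖y‖⁻¹ • y from rfl, h2, inv_inv, Complex.real_smul]
  -- differentiability of V components at x
  have hnormd : DifferentiableAt ℝ (fun y : E3 => ‖y‖) x := (norm_hasFDerivAt hx).differentiableAt
  have hnormC : DifferentiableAt ℝ (fun y : E3 => ((‖y‖ : ℝ) : ℂ)) x :=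
    Complex.ofRealCLM.differentiableAt.comp x hnormd
  have hfgd : ∀ j : Fin 3, DifferentiableAt ℝ
      (fun y : E3 => fderiv ℝ g y (EuclideanSpace.single j 1)) x := by
    intro j
    have h1 : ContDiffAt ℝ 1 (fderiv ℝ g) x := (hgsm x hx).fderiv_right le_top
    have h2 : ContDiffAt ℝ 1 (fun y : E3 => fderiv ℝ g y (EuclideanSpace.single j 1)) x :=
      h1.clm_apply contDiffAt_const
    exact h2.differentiableAt one_ne_zero
  have hVd : ∀ j, DifferentiableAt ℝ (fun y => V y j) x := fun j => hnormC.mul (hfgd j)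
  -- 0-homogeneity of V
  have hVhom : ∀ j (t : ℝ), 0 < t → V (t • x) j = V x j := by
    intro j t ht
    have h2 := fderiv_scale hghom hgd hx ht (EuclideanSpace.single j 1)
    have htC : ((t : ℝ) : ℂ) ≠ 0 := by exact_mod_cast ht.ne'
    simp only [hVdef]
    rw [h2, norm_smul, Real.norm_eq_abs, abs_of_pos ht, Complex.real_smul]
    push_cast
    field_simp
  -- Euler identity
  have hEuler : ∀ y : E3, y ≠ 0 → ∑ j, nuHat y j * V y j = 0 := by
    intro y hy
    have hL : ∑ j, fderiv ℝ g y (EuclideanSpace.single j 1) * nuHat y j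
        = fderiv ℝ g y (unitize y) := sum_clm_apply_nu (fderiv ℝ g y) y
    have h0 : fderiv ℝ g y (unitize y) = 0 := by
      rw [show (unitize y : E3) = ‖y‖⁻¹ • y from rfl, ContinuousLinearMap.map_smul,
        ray_fderiv_zero (hgd y hy) (fun c hc => hghom y hy c hc)]
      simp
    calc ∑ j, nuHat y j * V y j
        = ((‖y‖ : ℝ) : ℂ) * ∑ j, fderiv ℝ g y (EuclideanSpace.single j 1) * nuHat y j := by
          rw [Finset.mul_sum]
          exact Finset.sum_congr rfl (fun j _ => by simp only [hVdef]; ring)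
      _ = 0 := by rw [hL, h0, mul_zero]
  -- homogeneity of nuHat
  have hnuhom : ∀ (yv : E3) (t : ℝ), 0 < t → ∀ l, nuHat (t • yv) l = nuHat yv l := by
    intro yv t ht l
    rw [nuHat_eq_unitize, nuHat_eq_unitize, unitize_smul ht]
  -- derivative facts for nuHat at x
  choose Mν hMν hMνval using fun j => nu_hasFDerivAt hx j
  -- derivative facts for the radial factor F
  set F : E3 → ℂ := fun y => sbH n ((k * ‖y‖ : ℝ) : ℂ) with hFdef
  set c₀ : ℂ := (k : ℂ) * sbH' n ((k * ‖x‖ : ℝ) : ℂ) with hc₀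
  have hF : HasFDerivAt F ((ContinuousLinearMap.smulRight (1 : ℝ →L[ℝ] ℝ) c₀).comp
      (‖x‖⁻¹ • (innerSL ℝ x : E3 →L[ℝ] ℝ))) x := F_hasFDerivAt hx hk n
  have hFd : DifferentiableAt ℝ F x := hF.differentiableAt
  have hFfder := hF.fderiv
  have hFe : ∀ j, fderiv ℝ F x (EuclideanSpace.single j 1) = nuHat x j * c₀ := by
    intro j
    rw [hFfder]
    simp only [ContinuousLinearMap.coe_comp', Function.comp_apply,
      ContinuousLinearMap.smulRight_apply, ContinuousLinearMap.one_apply,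
      ContinuousLinearMap.coe_smul', Pi.smul_apply, innerSL_apply_apply, smul_eq_mul]
    rw [inner_single x j, Complex.real_smul]
    simp only [nuHat]
    try push_cast
    try ring
  have hFx : fderiv ℝ F x x = ((‖x‖ : ℝ) : ℂ) * c₀ := by
    rw [hFfder]
    simp only [ContinuousLinearMap.coe_comp', Function.comp_apply,
      ContinuousLinearMap.smulRight_apply, ContinuousLinearMap.one_apply,
      ContinuousLinearMap.coe_smul', Pi.smul_apply, innerSL_apply_apply, smul_eq_mul]
    rw [real_inner_self_eq_norm_sq, Complex.real_smul]
    push_cast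
    field_simp
  -- the tangential cross-product field C
  set C : E3 → Fin 3 → ℂ := fun y => ccross (fun j => V y j) (nuHat y) with hCdef
  have hCd : ∀ j, DifferentiableAt ℝ (fun y => C y j) x := by
    intro j
    fin_cases j
    · simp only [hCdef, ccross, Matrix.cons_val_zero]
      exact ((hVd 1).mul (hMν 2).differentiableAt).sub ((hVd 2).mul (hMν 1).differentiableAt)
    · simp only [hCdef, ccross, Matrix.cons_val_one, Matrix.head_cons]
      exact ((hVd 2).mul (hMν 0).differentiableAt).sub ((hVd 0).mul (hMν 2).differentiableAt)
    · simp only [hCdef, ccross, Matrix.cons_val_two, Matrix.tail_cons, Matrix.head_cons]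
      exact ((hVd 0).mul (hMν 1).differentiableAt).sub ((hVd 1).mul (hMν 0).differentiableAt)
  have hChom : ∀ j (t : ℝ), 0 < t → C (t • x) j = C x j := by
    intro j t ht
    simp only [hCdef]
    rw [show (fun l => V (t • x) l) = (fun l => V x l) from funext (fun l => hVhom l t ht),
      show nuHat (t • x) = nuHat x from funext (fun l => hnuhom x t ht l)]
  have hC0 : ∀ y : E3, y ≠ 0 → ∑ j, nuHat y j * C y j = 0 := by
    intro y hy
    rw [Fin.sum_univ_three]
    simp only [hCdef, ccross, Matrix.cons_val_zero, Matrix.cons_val_one, Matrix.head_cons,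
      Matrix.cons_val_two, Matrix.tail_cons]
    ring
  have hne : {y : E3 | y ≠ 0} ∈ nhds x := isOpen_ne.mem_nhds hx
  -- rewrite the fixed-point quantities
  rw [hkey x hx, hYgu x hx]
  simp only []
  refine ⟨?_, ?_, ?_, ?_, ?_, ?_⟩
  · -- (1)
    have hev : (fun y : E3 => sbH n ((k * ‖y‖ : ℝ) : ℂ) * cgrad (Y p m) (unitize y) i)
        =ᶠ[nhds x] fun y => F y * V y i := by
      filter_upwards [hne] with y hy
      rw [hkey y hy]
    have hsum : ∀ j : Fin 3,
        cgrad (fun y => sbH n ((k * ‖y‖ : ℝ) : ℂ) * cgrad (Y p m) (unitize y) i) x j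
        = fderiv ℝ (fun y => F y * V y i) x (EuclideanSpace.single j 1) := by
      intro j
      exact congrArg (fun L : E3 →L[ℝ] ℂ => L (EuclideanSpace.single j 1)) hev.fderiv_eq
    calc ∑ j, cgrad (fun y => sbH n ((k * ‖y‖ : ℝ) : ℂ) * cgrad (Y p m) (unitize y) i) x j
          * nuHat x j
        = ∑ j, fderiv ℝ (fun y => F y * V y i) x (EuclideanSpace.single j 1) * nuHat x j := by
          exact Finset.sum_congr rfl (fun j _ => by rw [hsum j])
      _ = ((‖x‖ : ℝ) : ℂ)⁻¹ * (V x i * (((‖x‖ : ℝ) : ℂ) * c₀)) :=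
          radial_sum hx hFd (hVd i) hFx (fun t ht => hVhom i t ht)
      _ = c₀ * V x i := by field_simp
  · -- (2)
    have hev : ∀ j : Fin 3, (fun y : E3 => sbH n ((k * ‖y‖ : ℝ) : ℂ) * cgrad (Y p m) (unitize y) j)
        =ᶠ[nhds x] fun y => F y * V y j := by
      intro j
      filter_upwards [hne] with y hy
      rw [hkey y hy]
    calc ∑ j, cgrad (fun y => sbH n ((k * ‖y‖ : ℝ) : ℂ) * cgrad (Y p m) (unitize y) j) x i
          * nuHat x j
        = ∑ j, fderiv ℝ (fun y => F y * V y j) x (EuclideanSpace.single i 1) * nuHat x j := by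
          refine Finset.sum_congr rfl (fun j _ => ?_)
          exact congrArg (fun z => z * nuHat x j)
            (congrArg (fun L : E3 →L[ℝ] ℂ => L (EuclideanSpace.single i 1)) (hev j).fderiv_eq)
      _ = -(F x * V x i / ((‖x‖ : ℝ) : ℂ)) := trans_sum hx hFd hVd hEuler i
  · -- (3)
    have hev : (fun y : E3 => sbH n ((k * ‖y‖ : ℝ) : ℂ) * Y p m (unitize y) * nuHat y i)
        =ᶠ[nhds x] fun y => F y * (g y * nuHat y i) := by
      filter_upwards [hne] with y hy
      rw [hYgu y hy, mul_assoc]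
    have hAd : DifferentiableAt ℝ (fun y => g y * nuHat y i) x :=
      (hgd x hx).mul (hMν i).differentiableAt
    have hA0 : ∀ t : ℝ, 0 < t → g (t • x) * nuHat (t • x) i = g x * nuHat x i := by
      intro t ht
      rw [hghom x hx t ht, hnuhom x t ht i]
    calc ∑ j, cgrad (fun y => sbH n ((k * ‖y‖ : ℝ) : ℂ) * Y p m (unitize y) * nuHat y i) x j
          * nuHat x j
        = ∑ j, fderiv ℝ (fun y => F y * (g y * nuHat y i)) x (EuclideanSpace.single j 1)
            * nuHat x j := by
          refine Finset.sum_congr rfl (fun j _ => ?_)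
          exact congrArg (fun z => z * nuHat x j)
            (congrArg (fun L : E3 →L[ℝ] ℂ => L (EuclideanSpace.single j 1)) hev.fderiv_eq)
      _ = ((‖x‖ : ℝ) : ℂ)⁻¹ * ((g x * nuHat x i) * (((‖x‖ : ℝ) : ℂ) * c₀)) :=
          radial_sum hx hFd hAd hFx hA0
      _ = c₀ * g x * nuHat x i := by field_simp
  · -- (4)
    have hev : ∀ j : Fin 3, (fun y : E3 => sbH n ((k * ‖y‖ : ℝ) : ℂ) * Y p m (unitize y) * nuHat y j)
        =ᶠ[nhds x] fun y => (F y * g y) * nuHat y j := by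
      intro j
      filter_upwards [hne] with y hy
      rw [hYgu y hy]
    have hW : DifferentiableAt ℝ (fun y => F y * g y) x := hFd.mul (hgd x hx)
    have hginv : fderiv ℝ g x (EuclideanSpace.single i 1) = ((‖x‖ : ℝ) : ℂ)⁻¹ * V x i := by
      simp only [hVdef]
      field_simp
    calc ∑ j, cgrad (fun y => sbH n ((k * ‖y‖ : ℝ) : ℂ) * Y p m (unitize y) * nuHat y j) x i
          * nuHat x j
        = ∑ j, fderiv ℝ (fun y => (F y * g y) * nuHat y j) x (EuclideanSpace.single i 1)
            * nuHat x j := by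
          refine Finset.sum_congr rfl (fun j _ => ?_)
          exact congrArg (fun z => z * nuHat x j)
            (congrArg (fun L : E3 →L[ℝ] ℂ => L (EuclideanSpace.single i 1)) (hev j).fderiv_eq)
      _ = fderiv ℝ (fun y => F y * g y) x (EuclideanSpace.single i 1) := part4_sum hx hW i
      _ = F x * fderiv ℝ g x (EuclideanSpace.single i 1)
            + g x * fderiv ℝ F x (EuclideanSpace.single i 1) := by
          rw [fderiv_fun_mul hFd (hgd x hx)]
          simp only [ContinuousLinearMap.add_apply, ContinuousLinearMap.coe_smul',
            Pi.smul_apply, smul_eq_mul]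
          try ring
      _ = c₀ * g x * nuHat x i + F x / ((‖x‖ : ℝ) : ℂ) * V x i := by
          rw [hginv, hFe i]
          field_simp
          ring
  · -- (5)
    have hev : (fun y : E3 => sbH n ((k * ‖y‖ : ℝ) : ℂ)
          * ccross (cgrad (Y p m) (unitize y)) (nuHat y) i)
        =ᶠ[nhds x] fun y => F y * C y i := by
      filter_upwards [hne] with y hy
      rw [hkey y hy]
    calc ∑ j, cgrad (fun y => sbH n ((k * ‖y‖ : ℝ) : ℂ)
            * ccross (cgrad (Y p m) (unitize y)) (nuHat y) i) x j * nuHat x j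
        = ∑ j, fderiv ℝ (fun y => F y * C y i) x (EuclideanSpace.single j 1) * nuHat x j := by
          refine Finset.sum_congr rfl (fun j _ => ?_)
          exact congrArg (fun z => z * nuHat x j)
            (congrArg (fun L : E3 →L[ℝ] ℂ => L (EuclideanSpace.single j 1)) hev.fderiv_eq)
      _ = ((‖x‖ : ℝ) : ℂ)⁻¹ * (C x i * (((‖x‖ : ℝ) : ℂ) * c₀)) :=
          radial_sum hx hFd (hCd i) hFx (fun t ht => hChom i t ht)
      _ = c₀ * ccross (fun j => V x j) (nuHat x) i := by
          simp only [hCdef]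
          field_simp
  · -- (6)
    have hev : ∀ j : Fin 3, (fun y : E3 => sbH n ((k * ‖y‖ : ℝ) : ℂ)
          * ccross (cgrad (Y p m) (unitize y)) (nuHat y) j)
        =ᶠ[nhds x] fun y => F y * C y j := by
      intro j
      filter_upwards [hne] with y hy
      rw [hkey y hy]
    calc ∑ j, cgrad (fun y => sbH n ((k * ‖y‖ : ℝ) : ℂ)
            * ccross (cgrad (Y p m) (unitize y)) (nuHat y) j) x i * nuHat x j
        = ∑ j, fderiv ℝ (fun y => F y * C y j) x (EuclideanSpace.single i 1) * nuHat x j := by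
          refine Finset.sum_congr rfl (fun j _ => ?_)
          exact congrArg (fun z => z * nuHat x j)
            (congrArg (fun L : E3 →L[ℝ] ℂ => L (EuclideanSpace.single i 1)) (hev j).fderiv_eq)
      _ = -(F x * C x i / ((‖x‖ : ℝ) : ℂ)) := trans_sum hx hFd hCd hC0 i
      _ = -(F x / ((‖x‖ : ℝ) : ℂ)) * ccross (fun j => V x j) (nuHat x) i := by
          simp only [hCdef]
          field_simp
end
end
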